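/- For the even cycle C_{2k}, the pebbling number equals 2^k. -/

import Mathlib

open SimpleGraph

variable {V : Type*}

/-- Apply a pebbling move along the ordered pair `e`. -/
def applyMove [DecidableEq V] (D : V → ℕ) (e : V × V) : V → ℕ :=
  fun w => if w = e.1 then D w - 2 else if w = e.2 then D w + 1 else D w

/-- A list of ordered pairs is a valid pebbling sequence from `D`. -/
def ValidSeq [DecidableEq V] (G : SimpleGraph V) : (V → ℕ) → List (V × V) → Prop
  | _, [] => True
  | D, e :: l => G.Adj e.1 e.2 ∧ 2 ≤ D e.1 ∧ ValidSeq G (applyMove D e) l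

def applySeq [DecidableEq V] (D : V → ℕ) : List (V × V) → (V → ℕ)
  | [] => D
  | e :: l => applySeq (applyMove D e) l

/-- `r` is `m`-reachable under `D`. -/
def Reaches [DecidableEq V] (G : SimpleGraph V) (D : V → ℕ) (r : V) (m : ℕ) : Prop :=
  ∃ l : List (V × V), ValidSeq G D l ∧ m ≤ applySeq D l r

def Solvable [DecidableEq V] (G : SimpleGraph V) (D : V → ℕ) : Prop :=
  ∀ r : V, Reaches G D r 1

noncomputable def pebNumTo [Fintype V] [DecidableEq V] (G : SimpleGraph V) (r : V) : ℕ :=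
  sInf {k : ℕ | ∀ D : V → ℕ, (∑ v, D v) = k → Reaches G D r 1}

noncomputable def pebNum [Fintype V] [DecidableEq V] (G : SimpleGraph V) : ℕ :=
  sInf {k : ℕ | ∀ D : V → ℕ, (∑ v, D v) = k → Solvable G D}

noncomputable def optPebNum [Fintype V] [DecidableEq V] (G : SimpleGraph V) : ℕ :=
  sInf {k : ℕ | ∃ D : V → ℕ, (∑ v, D v) = k ∧ Solvable G D}

/-! ### Auxiliary lemmas -/

section Aux

variable [DecidableEq V] {G : SimpleGraph V}

lemma applySeq_append (D : V → ℕ) (l1 l2 : List (V × V)) :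
    applySeq D (l1 ++ l2) = applySeq (applySeq D l1) l2 := by
  induction l1 generalizing D with
  | nil => rfl
  | cons e l ih => simp [applySeq, ih]

lemma validSeq_append {D : V → ℕ} {l1 l2 : List (V × V)}
    (h1 : ValidSeq G D l1) (h2 : ValidSeq G (applySeq D l1) l2) :
    ValidSeq G D (l1 ++ l2) := by
  induction l1 generalizing D with
  | nil => exact h2
  | cons e l ih =>
    obtain ⟨ha, hb, hc⟩ := h1
    exact ⟨ha, hb, ih hc h2⟩

/-- Do `m` moves from `a` to `b` in a row. -/
lemma moveMany {a b : V} (hab : G.Adj a b) :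
    ∀ (m : ℕ) (D : V → ℕ), 2 * m ≤ D a →
    ∃ l : List (V × V), ValidSeq G D l ∧
      applySeq D l = fun w => if w = a then D a - 2 * m else if w = b then D b + m else D w := by
  intro m
  induction m with
  | zero =>
    intro D _
    refine ⟨[], trivial, ?_⟩
    funext w
    show D w = _
    by_cases h1 : w = a
    · subst h1; simp
    · by_cases h2 : w = b
      · subst h2; simp [h1]
      · simp [h1, h2]
  | succ m ih =>
    intro D hD
    have hne : a ≠ b := hab.ne
    set D1 := applyMove D (a, b) with hD1
    have h1a : D1 a = D a - 2 := by simp [hD1, applyMove]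
    have h1b : D1 b = D b + 1 := by simp [hD1, applyMove, hne.symm]
    have h1o : ∀ w, w ≠ a → w ≠ b → D1 w = D w := by
      intro w hwa hwb; simp [hD1, applyMove, hwa, hwb]
    have hm : 2 * m ≤ D1 a := by rw [h1a]; omega
    obtain ⟨l, hl, happ⟩ := ih D1 hm
    refine ⟨(a, b) :: l, ⟨hab, by show 2 ≤ D a; omega, hl⟩, ?_⟩
    have hstep : applySeq D ((a, b) :: l) = applySeq D1 l := rfl
    rw [hstep, happ]
    funext w
    by_cases hw : w = a
    · rw [if_pos hw, if_pos hw, h1a]; omega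
    · rw [if_neg hw, if_neg hw]
      by_cases hw2 : w = b
      · rw [if_pos hw2, if_pos hw2, h1b]; omega
      · rw [if_neg hw2, if_neg hw2, h1o w hw hw2]

/-- Greedy path lemma: if the weighted potential of pebbles along a path
`u 0, u 1, ..., u n` (moving toward `u 0`) is at least `2^n`, then `u 0` is reachable. -/
lemma path_reach (n : ℕ) (u : ℕ → V)
    (hadj : ∀ i < n, G.Adj (u (i + 1)) (u i))
    (hinj : ∀ i ≤ n, ∀ j ≤ n, u i = u j → i = j) :
    ∀ D : V → ℕ, 2 ^ n ≤ ∑ i ∈ Finset.range (n + 1), D (u i) * 2 ^ (n - i) →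
    Reaches G D (u 0) 1 := by
  induction n with
  | zero =>
    intro D hpot
    refine ⟨[], trivial, ?_⟩
    show 1 ≤ D (u 0)
    simpa using hpot
  | succ n ih =>
    intro D hpot
    have hadj' : G.Adj (u (n + 1)) (u n) := hadj n (Nat.lt_succ_self n)
    set m := D (u (n + 1)) / 2 with hm
    have hm2 : 2 * m ≤ D (u (n + 1)) := by omega
    obtain ⟨l1, hl1, happ1⟩ := moveMany hadj' m D (by omega)
    set D1 := applySeq D l1 with hD1
    -- compute new potential
    have hune : ∀ i ≤ n, u i ≠ u (n + 1) := by
      intro i hi h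
      have := hinj i (by omega) (n + 1) le_rfl h
      omega
    have hD1i : ∀ i < n, D1 (u i) = D (u i) := by
      intro i hi
      rw [happ1]
      have h1 : u i ≠ u (n + 1) := hune i (by omega)
      have h2 : u i ≠ u n := fun h => by
        have := hinj i (by omega) n (by omega) h; omega
      simp [h1, h2]
    have hD1n : D1 (u n) = D (u n) + m := by
      rw [happ1]
      simp [hune n le_rfl]
    -- old potential split
    have hsplit : ∑ i ∈ Finset.range (n + 2), D (u i) * 2 ^ (n + 1 - i)
        = 2 * (∑ i ∈ Finset.range (n + 1), D (u i) * 2 ^ (n - i)) + D (u (n + 1)) := by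
      rw [Finset.sum_range_succ, Finset.mul_sum]
      congr 1
      · apply Finset.sum_congr rfl
        intro i hi
        rw [Finset.mem_range] at hi
        have : n + 1 - i = (n - i) + 1 := by omega
        rw [this, pow_succ]
        ring
      · simp
    have hnew : 2 ^ n ≤ ∑ i ∈ Finset.range (n + 1), D1 (u i) * 2 ^ (n - i) := by
      have hsum : ∑ i ∈ Finset.range (n + 1), D1 (u i) * 2 ^ (n - i)
          = (∑ i ∈ Finset.range (n + 1), D (u i) * 2 ^ (n - i)) + m := by
        rw [Finset.sum_range_succ, Finset.sum_range_succ]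
        rw [hD1n]
        have : ∑ i ∈ Finset.range n, D1 (u i) * 2 ^ (n - i)
            = ∑ i ∈ Finset.range n, D (u i) * 2 ^ (n - i) := by
          apply Finset.sum_congr rfl
          intro i hi
          rw [Finset.mem_range] at hi
          rw [hD1i i hi]
        rw [this]
        simp; ring
      rw [hsum]
      rw [hsplit] at hpot
      have hodd : D (u (n + 1)) ≤ 2 * m + 1 := by omega
      have h2 : (2 : ℕ) ^ (n + 1) = 2 * 2 ^ n := by ring
      omega
    obtain ⟨l2, hl2, hr2⟩ := ih (fun i hi => hadj i (by omega))
      (fun i hi j hj h => hinj i (by omega) j (by omega) h) D1 hnew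
    refine ⟨l1 ++ l2, validSeq_append hl1 ?_, ?_⟩
    · exact hl2
    · rw [applySeq_append]; exact hr2

/-- Weighted sum change under a single move. -/
lemma sum_applyMove [Fintype V] (D : V → ℕ) (a b : V) (hab : a ≠ b) (h2 : 2 ≤ D a)
    (w : V → ℕ) :
    (∑ v, applyMove D (a, b) v * w v) + 2 * w a = (∑ v, D v * w v) + w b := by
  have key : ∀ v, applyMove D (a, b) v * w v + (if v = a then 2 * w a else 0)
      = D v * w v + (if v = b then w b else 0) := by
    intro v
    by_cases hv : v = a
    · simp [applyMove, hv, hab]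
      conv_rhs => rw [← Nat.sub_add_cancel h2]
      ring
    · by_cases hv2 : v = b
      · simp [applyMove, hv, hv2, Ne.symm hab]
        ring
      · simp [applyMove, hv, hv2]
  calc (∑ v, applyMove D (a, b) v * w v) + 2 * w a
      = ∑ v, (applyMove D (a, b) v * w v + (if v = a then 2 * w a else 0)) := by
        rw [Finset.sum_add_distrib, Finset.sum_ite_eq' Finset.univ a (fun _ => 2 * w a)]
        simp
    _ = ∑ v, (D v * w v + (if v = b then w b else 0)) := by
        apply Finset.sum_congr rfl; intro v _; exact key v
    _ = (∑ v, D v * w v) + w b := by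
        rw [Finset.sum_add_distrib, Finset.sum_ite_eq' Finset.univ b (fun _ => w b)]
        simp

/-- If the weight function does not increase more than double along edges,
the weighted total is nonincreasing along a valid pebbling sequence. -/
lemma potential_mono [Fintype V] (w : V → ℕ)
    (hw : ∀ a b : V, G.Adj a b → w b ≤ 2 * w a) :
    ∀ (l : List (V × V)) (D : V → ℕ), ValidSeq G D l →
    (∑ v, applySeq D l v * w v) ≤ ∑ v, D v * w v := by
  intro l
  induction l with
  | nil => intro D _; exact le_rfl
  | cons e l ih =>
    intro D hv
    obtain ⟨a, b⟩ := e
    obtain ⟨hadj, h2, hrest⟩ := hv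
    have hsum := sum_applyMove D a b hadj.ne h2 w
    have hle := hw a b hadj
    have h1 : (∑ v, applyMove D (a, b) v * w v) ≤ ∑ v, D v * w v := by omega
    calc (∑ v, applySeq D ((a, b) :: l) v * w v)
        = ∑ v, applySeq (applyMove D (a, b)) l v * w v := rfl
      _ ≤ ∑ v, applyMove D (a, b) v * w v := ih (applyMove D (a, b)) hrest
      _ ≤ ∑ v, D v * w v := h1

end Aux

open Fin.NatCast Fin.CommRing

section Cycle

lemma fin_sub_one_cases {n : ℕ} (a b : Fin n) (h : (a - b).val = 1) :
    a.val = b.val + 1 ∨ (a.val = 0 ∧ b.val = n - 1) := by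
  have ha := a.isLt
  have hb := b.isLt
  rw [Fin.sub_def] at h
  simp only at h
  rcases Nat.lt_or_ge (n - b.val + a.val) n with hlt | hge
  · rw [Nat.mod_eq_of_lt hlt] at h
    right; omega
  · rw [Nat.mod_eq_sub_mod hge, Nat.mod_eq_of_lt (by omega)] at h
    left; omega

lemma cycle_adj_succ {n : ℕ} [NeZero n] (hn : 2 ≤ n) (x : Fin n) :
    (cycleGraph n).Adj (x + 1) x := by
  rw [cycleGraph_adj']
  left
  rw [add_sub_cancel_left]
  have h1 : (1 : Fin n) = ((1 : ℕ) : Fin n) := by simp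
  rw [h1, Fin.val_natCast, Nat.mod_eq_of_lt (by omega)]

end Cycle

theorem pebbling_number_even_cycle (k : ℕ) (hk : 1 ≤ k) :
    pebNum (SimpleGraph.cycleGraph (2 * k)) = 2 ^ k := by
  haveI : NeZero (2 * k) := ⟨by omega⟩
  set n := 2 * k with hn
  have hn2 : 2 ≤ n := by omega
  set G := SimpleGraph.cycleGraph n with hG
  -- cast facts
  have hcast : ∀ m : ℕ, ((m : Fin n) : Fin n).val = m % n := fun m => Fin.val_natCast m n
  have hnc : ((n : ℕ) : Fin n) = 0 := by
    ext
    simp [Fin.val_natCast]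
  have hkk : ((k : Fin n) : Fin n) + ((k : Fin n) : Fin n) = 0 := by
    have : ((k : Fin n) : Fin n) + ((k : Fin n) : Fin n) = ((k + k : ℕ) : Fin n) :=
      (Nat.cast_add k k).symm
    rw [this]
    have : k + k = n := by omega
    rw [this, hnc]
  -- Upper bound: every distribution of 2^k pebbles is solvable
  have upper : ∀ D : Fin n → ℕ, (∑ v, D v) = 2 ^ k → Solvable G D := by
    intro D hsum r
    by_cases hr : 1 ≤ D r
    · exact ⟨[], trivial, by simpa [applySeq] using hr⟩
    have hr0 : D r = 0 := by omega
    set u : ℕ → Fin n := fun i => r + (i : Fin n) with hu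
    set v : ℕ → Fin n := fun i => r - (i : Fin n) with hv
    have hu0 : u 0 = r := by simp [hu]
    have hv0 : v 0 = r := by simp [hv]
    have huadj : ∀ i, G.Adj (u (i + 1)) (u i) := by
      intro i
      have : u (i + 1) = u i + 1 := by
        simp only [hu]
        push_cast
        ring
      rw [this]
      exact cycle_adj_succ hn2 (u i)
    have hvadj : ∀ i, G.Adj (v (i + 1)) (v i) := by
      intro i
      have : v i = v (i + 1) + 1 := by
        simp only [hv]
        push_cast
        ring
      rw [this]
      exact (cycle_adj_succ hn2 (v (i + 1))).symm
    have hcast_inj : ∀ i ≤ k, ∀ j ≤ k, (i : Fin n) = (j : Fin n) → i = j := by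
      intro i hi j hj h
      have h1 : (i : Fin n).val = (j : Fin n).val := by rw [h]
      rw [hcast, hcast] at h1
      rw [Nat.mod_eq_of_lt (by omega), Nat.mod_eq_of_lt (by omega)] at h1
      exact h1
    have huinj : ∀ i ≤ k, ∀ j ≤ k, u i = u j → i = j := by
      intro i hi j hj h
      exact hcast_inj i hi j hj (by simpa [hu] using add_left_cancel h)
    have hvinj : ∀ i ≤ k, ∀ j ≤ k, v i = v j → i = j := by
      intro i hi j hj h
      apply hcast_inj i hi j hj
      have : r - (i : Fin n) = r - (j : Fin n) := h
      have := sub_right_injective this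
      exact this
    -- the antipode
    have hvk : v k = u k := by
      show r - (k : Fin n) = r + (k : Fin n)
      rw [sub_eq_add_neg, neg_eq_of_add_eq_zero_left hkk]
    -- sum reindex: total sum
    have hsum1 : ∑ i ∈ Finset.range n, D (u i) = ∑ x : Fin n, D x := by
      rw [← Fin.sum_univ_eq_sum_range (fun i => D (u i)) n]
      have : ∀ x : Fin n, D (u x.val) = D (r + x) := by
        intro x
        simp [hu, Fin.cast_val_eq_self]
      rw [Finset.sum_congr rfl (fun x _ => this x)]
      exact Fintype.sum_equiv (Equiv.addLeft r) _ _ (fun x => rfl)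
    -- split range n = range (k+1) ++ shifted range (k-1)
    have hsplit : ∑ i ∈ Finset.range n, D (u i)
        = (∑ i ∈ Finset.range (k + 1), D (u i))
          + ∑ i ∈ Finset.range (k - 1), D (u (k + 1 + i)) := by
      have : n = (k + 1) + (k - 1) := by omega
      rw [this, Finset.sum_range_add]
    -- identify the tail with the v-arc
    have htail : ∀ i < k - 1, u (k + 1 + i) = v (k - 1 - i) := by
      intro i hi
      show r + ((k + 1 + i : ℕ) : Fin n) = r - ((k - 1 - i : ℕ) : Fin n)
      have hadd : ((k + 1 + i : ℕ) : Fin n) + ((k - 1 - i : ℕ) : Fin n) = 0 := by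
        rw [← Nat.cast_add]
        have h1 : (k + 1 + i) + (k - 1 - i) = n := by omega
        rw [h1, hnc]
      rw [sub_eq_add_neg, ← eq_neg_of_add_eq_zero_left hadd]
    have htail2 : ∑ i ∈ Finset.range (k - 1), D (u (k + 1 + i))
        = ∑ j ∈ Finset.range (k - 1), D (v (j + 1)) := by
      rw [← Finset.sum_range_reflect (fun j => D (v (j + 1))) (k - 1)]
      apply Finset.sum_congr rfl
      intro i hi
      rw [Finset.mem_range] at hi
      rw [htail i hi, show k - 1 - 1 - i + 1 = k - 1 - i from by omega]
    have hvsum : ∑ i ∈ Finset.range (k + 1), D (v i)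
        = D r + ((∑ j ∈ Finset.range (k - 1), D (v (j + 1))) + D (u k)) := by
      obtain ⟨k', hk'⟩ : ∃ k', k = k' + 1 := ⟨k - 1, by omega⟩
      subst hk'
      simp only [Nat.add_sub_cancel]
      rw [Finset.sum_range_succ', Finset.sum_range_succ, hv0, hvk]
      omega
    -- the two potentials
    set SA := ∑ i ∈ Finset.range (k + 1), D (u i) * 2 ^ (k - i) with hSA
    set SB := ∑ i ∈ Finset.range (k + 1), D (v i) * 2 ^ (k - i) with hSB
    have hkey : 2 * 2 ^ k ≤ SA + SB := by
      -- combined sum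
      have hAB : SA + SB = ∑ i ∈ Finset.range (k + 1), (D (u i) + D (v i)) * 2 ^ (k - i) := by
        rw [hSA, hSB, ← Finset.sum_add_distrib]
        apply Finset.sum_congr rfl
        intro i _
        ring
      have hcount : (∑ i ∈ Finset.range (k + 1), (D (u i) + D (v i)))
          = 2 ^ k + D r + D (u k) := by
        rw [Finset.sum_add_distrib, hvsum]
        have : ∑ i ∈ Finset.range (k + 1), D (u i)
            = (∑ i ∈ Finset.range n, D (u i)) - ∑ i ∈ Finset.range (k - 1), D (u (k + 1 + i)) := by
          omega
        rw [hsum1] at hsplit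
        rw [hsum] at hsplit
        rw [htail2] at hsplit
        omega
      -- split off the last term
      rw [hAB]
      rw [Finset.sum_range_succ]
      have hlast : (D (u k) + D (v k)) * 2 ^ (k - k) = 2 * D (u k) := by
        rw [hvk]
        simp
        ring
      rw [hlast]
      have hbig : ∑ i ∈ Finset.range k, (D (u i) + D (v i)) * 2 ^ (k - i)
          ≥ 2 * ∑ i ∈ Finset.range k, (D (u i) + D (v i)) := by
        rw [Finset.mul_sum]
        apply Finset.sum_le_sum
        intro i hi
        rw [Finset.mem_range] at hi
        have h1 : 2 ≤ 2 ^ (k - i) := by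
          calc (2:ℕ) = 2 ^ 1 := (pow_one 2).symm
          _ ≤ 2 ^ (k - i) := Nat.pow_le_pow_right (by norm_num) (by omega)
        calc 2 * (D (u i) + D (v i)) = (D (u i) + D (v i)) * 2 := by ring
          _ ≤ (D (u i) + D (v i)) * 2 ^ (k - i) := Nat.mul_le_mul_left _ h1
      have hcount' : (∑ i ∈ Finset.range k, (D (u i) + D (v i))) + 2 * D (u k)
          = 2 ^ k + D r + D (u k) := by
        rw [← hcount, Finset.sum_range_succ]
        rw [hvk]
        ring
      omega
    have hcase : 2 ^ k ≤ SA ∨ 2 ^ k ≤ SB := by omega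
    rcases hcase with h | h
    · have := path_reach (G := G) k u (fun i _ => huadj i) huinj D h
      rwa [hu0] at this
    · have := path_reach (G := G) k v (fun i _ => hvadj i) hvinj D h
      rwa [hv0] at this
  -- Lower bound: any count below 2^k admits an unsolvable distribution
  have lower : ∀ j : ℕ, j < 2 ^ k →
      ¬ (∀ D : Fin n → ℕ, (∑ v, D v) = j → Solvable G D) := by
    intro j hj hall
    -- all pebbles on the antipode z of 0
    set z : Fin n := (k : Fin n) with hz
    set D : Fin n → ℕ := fun x => if x = z then j else 0 with hD
    have hsumD : (∑ x, D x) = j := by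
      rw [hD]
      rw [Finset.sum_ite_eq' Finset.univ z (fun _ => j)]
      simp
    -- weight function
    set d : Fin n → ℕ := fun x => min x.val (n - x.val) with hd
    set w : Fin n → ℕ := fun x => 2 ^ (k - d x) with hw
    have hdle : ∀ x : Fin n, d x ≤ k := by
      intro x
      have := x.isLt
      simp only [hd]
      omega
    have hwadj : ∀ a b : Fin n, G.Adj a b → w b ≤ 2 * w a := by
      intro a b hadj
      rw [hG, cycleGraph_adj'] at hadj
      have hb : d a ≤ d b + 1 := by
        have ha' := a.isLt
        have hb' := b.isLt
        have hda : d a = min a.val (n - a.val) := rfl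
        have hdb : d b = min b.val (n - b.val) := rfl
        rcases hadj with h | h
        · rcases fin_sub_one_cases a b h with h1 | h1 <;> omega
        · rcases fin_sub_one_cases b a h with h1 | h1 <;> omega
      have : k - d b ≤ (k - d a) + 1 := by
        have := hdle a
        have := hdle b
        omega
      calc w b = 2 ^ (k - d b) := rfl
        _ ≤ 2 ^ ((k - d a) + 1) := Nat.pow_le_pow_right (by norm_num) this
        _ = 2 * 2 ^ (k - d a) := by ring
        _ = 2 * w a := rfl
    have hdz : d z = k := by
      simp only [hd, hz]
      rw [hcast]
      rw [Nat.mod_eq_of_lt (by omega)]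
      omega
    have hd0 : d (0 : Fin n) = 0 := by simp [hd]
    have hΦ : (∑ x, D x * w x) = j := by
      have : ∀ x, D x * w x = if x = z then j * w z else 0 := by
        intro x
        by_cases hx : x = z <;> simp [hD, hx]
      rw [Finset.sum_congr rfl (fun x _ => this x)]
      rw [Finset.sum_ite_eq' Finset.univ z (fun _ => j * w z)]
      simp only [Finset.mem_univ, if_pos]
      rw [hw]
      simp only
      rw [hdz]
      simp
    obtain ⟨l, hl, hreach⟩ := hall D hsumD 0
    have hmono := potential_mono (G := G) w hwadj l D hl
    rw [hΦ] at hmono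
    have hterm : applySeq D l 0 * w 0 ≤ ∑ x, applySeq D l x * w x :=
      Finset.single_le_sum (f := fun x => applySeq D l x * w x) (fun _ _ => Nat.zero_le _)
        (Finset.mem_univ 0)
    have hw0 : w 0 = 2 ^ k := by
      rw [hw]; simp only; rw [hd0]; simp
    have : 2 ^ k ≤ applySeq D l 0 * w 0 := by
      rw [hw0]
      calc 2 ^ k = 1 * 2 ^ k := (one_mul _).symm
        _ ≤ applySeq D l 0 * 2 ^ k := Nat.mul_le_mul_right _ hreach
    omega
  -- Conclude
  rw [pebNum]
  have hmem : (2 ^ k) ∈ {m : ℕ | ∀ D : Fin n → ℕ, (∑ v, D v) = m → Solvable G D} := upper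
  apply le_antisymm
  · exact Nat.sInf_le hmem
  · apply le_csInf ⟨2 ^ k, hmem⟩
    intro b hb
    by_contra hlt
    exact lower b (by omega) hb
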